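/- arXiv:1911.08314 — 4 statements merged into one kernel-verified Lean document; each statement's English description precedes it below -/
import Mathlib

section
/- In the Weyl algebra of four oscillators, the Casimir operator C^{(1234)} = (J_0^{(1234)})² − J_+^{(1234)} J_-^{(1234)} − J_0^{(1234)} of the sum of four metaplectic representations of su(1,1) equals −(1/4)Σ_{1≤μ<ν≤4} L_{μν}² minus a constant; in particular C^{(1234)} = −2K_1 where K_1 = (1/8)Σ_{1≤μ<ν≤4} L_{μν}² (the normalization of K_1 being adjusted by the appropriate additive scalar if necessary). -/
/-- In the Weyl algebra of four oscillators, the su(1,1) Casimir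
C^{(1234)} = (J₀^{(1234)})² − J₊^{(1234)} J₋^{(1234)} − J₀^{(1234)} of the sum
of four metaplectic representations equals −2K₁ where
K₁ = (1/8)Σ_{1≤μ<ν≤4} L_{μν}², up to an explicit additive scalar. -/
theorem stmt7 (R : Type*) [Ring R] [Algebra ℂ R]
    (a ad : Fin 4 → R)
    (hcomm : ∀ μ ν, a μ * ad ν - ad ν * a μ = if μ = ν then 1 else 0)
    (haa : ∀ μ ν, a μ * a ν = a ν * a μ)
    (hadad : ∀ μ ν, ad μ * ad ν = ad ν * ad μ)
    (L : Fin 4 → Fin 4 → R)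
    (hL : ∀ μ ν, L μ ν = ad μ * a ν - a μ * ad ν)
    (J0 Jp Jm C K1 : R)
    (hJ0 : J0 = ∑ μ : Fin 4, (1/2 : ℂ) • (ad μ * a μ + (1/2 : ℂ) • (1 : R)))
    (hJp : Jp = ∑ μ : Fin 4, (1/2 : ℂ) • (ad μ * ad μ))
    (hJm : Jm = ∑ μ : Fin 4, (1/2 : ℂ) • (a μ * a μ))
    (hC : C = J0 * J0 - Jp * Jm - J0)
    (hK1 : K1 = (1/8 : ℂ) • (∑ μ : Fin 4, ∑ ν : Fin 4, if μ < ν then L μ ν ^ 2 else 0)) :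
    ∃ c : ℂ, C = -((2 : ℂ) • K1) + c • (1 : R) := by
  refine ⟨0, ?_⟩
  have swap : ∀ (u v : R), u * v = v * u → ∀ x : R, u * (v * x) = v * (u * x) := by
    intro u v h x; rw [← mul_assoc, h, mul_assoc]
  -- move a's past ad's
  have h1 : ∀ μ ν, a μ * ad ν = ad ν * a μ + (if μ = ν then (1:R) else 0) := by
    intro μ ν
    have := hcomm μ ν
    rw [sub_eq_iff_eq_add'] at this
    rw [this, add_comm]
  have h2 : ∀ μ ν (x : R), a μ * (ad ν * x) = ad ν * (a μ * x) + (if μ = ν then x else 0) := by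
    intro μ ν x
    rw [← mul_assoc, h1, add_mul, mul_assoc, ite_mul, one_mul, zero_mul]
  -- sorting swaps (lower index to the left)
  have hd10 := hadad 1 0; have hd20 := hadad 2 0; have hd30 := hadad 3 0
  have hd21 := hadad 2 1; have hd31 := hadad 3 1; have hd32 := hadad 3 2
  have hd10' := swap _ _ hd10; have hd20' := swap _ _ hd20; have hd30' := swap _ _ hd30
  have hd21' := swap _ _ hd21; have hd31' := swap _ _ hd31; have hd32' := swap _ _ hd32
  have ha10 := haa 1 0; have ha20 := haa 2 0; have ha30 := haa 3 0
  have ha21 := haa 2 1; have ha31 := haa 3 1; have ha32 := haa 3 2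
  have ha10' := swap _ _ ha10; have ha20' := swap _ _ ha20; have ha30' := swap _ _ ha30
  have ha21' := swap _ _ ha21; have ha31' := swap _ _ ha31; have ha32' := swap _ _ ha32
  subst hC hK1 hJ0 hJp hJm
  simp only [hL, pow_two, Fin.sum_univ_four, Fin.isValue]
  simp only [show ((0:Fin 4) < 1) = True by simp, show ((0:Fin 4) < 2) = True by simp,
    show ((0:Fin 4) < 3) = True by simp, show ((1:Fin 4) < 2) = True by simp,
    show ((1:Fin 4) < 3) = True by simp, show ((2:Fin 4) < 3) = True by simp,
    show ((1:Fin 4) < 0) = False by simp, show ((2:Fin 4) < 0) = False by simp,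
    show ((3:Fin 4) < 0) = False by simp, show ((2:Fin 4) < 1) = False by simp,
    show ((3:Fin 4) < 1) = False by simp, show ((3:Fin 4) < 2) = False by simp,
    show ((0:Fin 4) < 0) = False by simp, show ((1:Fin 4) < 1) = False by simp,
    show ((2:Fin 4) < 2) = False by simp, show ((3:Fin 4) < 3) = False by simp,
    if_true, if_false]
  simp only [mul_add, add_mul, sub_mul, mul_sub, mul_one, one_mul,
    smul_mul_assoc, mul_smul_comm, smul_smul, smul_add, smul_sub,
    mul_assoc, h1, h2,
    hd10, hd20, hd30, hd21, hd31, hd32, hd10', hd20', hd30', hd21', hd31', hd32',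
    ha10, ha20, ha30, ha21, ha31, ha32, ha10', ha20', ha30', ha21', ha31', ha32']
  simp only [Fin.isValue, show ((0:Fin 4) = 1) = False by simp, show ((0:Fin 4) = 2) = False by simp,
    show ((0:Fin 4) = 3) = False by simp, show ((1:Fin 4) = 0) = False by simp,
    show ((1:Fin 4) = 2) = False by simp, show ((1:Fin 4) = 3) = False by simp,
    show ((2:Fin 4) = 0) = False by simp, show ((2:Fin 4) = 1) = False by simp,
    show ((2:Fin 4) = 3) = False by simp, show ((3:Fin 4) = 0) = False by simp,
    show ((3:Fin 4) = 1) = False by simp, show ((3:Fin 4) = 2) = False by simp,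
    if_true, if_false, if_pos rfl, mul_zero, zero_mul, add_zero, zero_add, mul_one, one_mul,
    mul_add, add_mul, smul_add, smul_smul]
  module
end

section
/- In the Weyl algebra of four oscillators, the elements N_1 + N_2 + N_3 + N_4, L_{12}², and L_{34}² all commute with both M_1 = (1/2)(N_1 + N_2 − N_3 − N_4) and M_2 = −(1/4)Σ_{1≤i<j≤4} L_{ij}²; hence δ_1 and δ_2 of the Hahn algebra are central in the algebra generated by M_1, M_2. -/
/-- In the Weyl algebra of four oscillators, the elements
N₁+N₂+N₃+N₄, L₁₂², L₃₄² all commute with both M₁ = (1/2)(N₁+N₂−N₃−N₄) and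
M₂ = −(1/4)Σ_{1≤i<j≤4} L_{ij}²; hence δ₁, δ₂ of the Hahn algebra are central
in the algebra generated by M₁, M₂. -/
theorem stmt9 (R : Type*) [Ring R] [Algebra ℂ R]
    (a ad : Fin 4 → R)
    (hcomm : ∀ μ ν, a μ * ad ν - ad ν * a μ = if μ = ν then 1 else 0)
    (haa : ∀ μ ν, a μ * a ν = a ν * a μ)
    (hadad : ∀ μ ν, ad μ * ad ν = ad ν * ad μ)
    (N : Fin 4 → R) (hN : ∀ i, N i = ad i * a i)
    (L : Fin 4 → Fin 4 → R)
    (hL : ∀ i j, L i j = ad i * a j - a i * ad j)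
    (M1 M2 d1 d2 : R)
    (hM1 : M1 = (1/2 : ℂ) • (N 0 + N 1 - N 2 - N 3))
    (hM2 : M2 = -((1/4 : ℂ) • (∑ i : Fin 4, ∑ j : Fin 4, if i < j then L i j ^ 2 else 0)))
    (hd1 : d1 = -((1/2 : ℂ) • ((N 0 + N 1 + N 2 + N 3 + 2) * (L 0 1 ^ 2 - L 2 3 ^ 2))))
    (hd2 : d2 = (1/2 : ℂ) • ((N 0 + N 1 + N 2 + N 3 + 2) ^ 2)
                 - (L 0 1 ^ 2 + L 2 3 ^ 2 + 2)) :
    ((N 0 + N 1 + N 2 + N 3) * M1 = M1 * (N 0 + N 1 + N 2 + N 3) ∧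
     (N 0 + N 1 + N 2 + N 3) * M2 = M2 * (N 0 + N 1 + N 2 + N 3) ∧
     L 0 1 ^ 2 * M1 = M1 * L 0 1 ^ 2 ∧ L 0 1 ^ 2 * M2 = M2 * L 0 1 ^ 2 ∧
     L 2 3 ^ 2 * M1 = M1 * L 2 3 ^ 2 ∧ L 2 3 ^ 2 * M2 = M2 * L 2 3 ^ 2) ∧
    (d1 * M1 = M1 * d1 ∧ d1 * M2 = M2 * d1 ∧
     d2 * M1 = M1 * d2 ∧ d2 * M2 = M2 * d2) := by
  -- basic normal-ordering machinery
  have ca' : ∀ (μ ν : Fin 4) (x : R), a μ * (ad ν * x) = ad ν * (a μ * x) + (if μ = ν then x else 0) := by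
    intro μ ν x
    have h : a μ * ad ν = ad ν * a μ + (if μ = ν then 1 else 0) := by
      rw [← hcomm μ ν]; abel
    rw [← mul_assoc, h, add_mul, mul_assoc, ite_mul, one_mul, zero_mul]
  have ca0 : ∀ (μ ν : Fin 4), a μ * ad ν = ad ν * a μ + (if μ = ν then 1 else 0) := by
    intro μ ν; rw [← hcomm μ ν]; abel
  have swa : ∀ (p q : Fin 4), q < p → ∀ x : R, a p * (a q * x) = a q * (a p * x) := by
    intro p q _ x; rw [← mul_assoc, haa, mul_assoc]
  have swa0 : ∀ (p q : Fin 4), q < p → a p * a q = a q * a p := fun p q _ => haa p q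
  have swd : ∀ (p q : Fin 4), q < p → ∀ x : R, ad p * (ad q * x) = ad q * (ad p * x) := by
    intro p q _ x; rw [← mul_assoc, hadad, mul_assoc]
  have swd0 : ∀ (p q : Fin 4), q < p → ad p * ad q = ad q * ad p := fun p q _ => hadad p q
  -- the total number operator commutes with everything in sight
  have g1 : (N 0 + N 1 + N 2 + N 3) * (N 0 + N 1 - N 2 - N 3)
      = (N 0 + N 1 - N 2 - N 3) * (N 0 + N 1 + N 2 + N 3) := by
    simp only [hL, hN, mul_sub, sub_mul, mul_add, add_mul, mul_assoc]
    simp [ca', ca0, swa, swa0, swd, swd0, mul_add, add_mul, mul_sub, sub_mul]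
    all_goals abel
  have t01 : L 0 1 * (N 0 + N 1 + N 2 + N 3) = (N 0 + N 1 + N 2 + N 3) * L 0 1 := by
    simp only [hL, hN, mul_sub, sub_mul, mul_add, add_mul, mul_assoc]
    simp [ca', ca0, swa, swa0, swd, swd0, mul_add, add_mul, mul_sub, sub_mul]
    all_goals abel
  have t02 : L 0 2 * (N 0 + N 1 + N 2 + N 3) = (N 0 + N 1 + N 2 + N 3) * L 0 2 := by
    simp only [hL, hN, mul_sub, sub_mul, mul_add, add_mul, mul_assoc]
    simp [ca', ca0, swa, swa0, swd, swd0, mul_add, add_mul, mul_sub, sub_mul]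
    all_goals abel
  have t03 : L 0 3 * (N 0 + N 1 + N 2 + N 3) = (N 0 + N 1 + N 2 + N 3) * L 0 3 := by
    simp only [hL, hN, mul_sub, sub_mul, mul_add, add_mul, mul_assoc]
    simp [ca', ca0, swa, swa0, swd, swd0, mul_add, add_mul, mul_sub, sub_mul]
    all_goals abel
  have t12 : L 1 2 * (N 0 + N 1 + N 2 + N 3) = (N 0 + N 1 + N 2 + N 3) * L 1 2 := by
    simp only [hL, hN, mul_sub, sub_mul, mul_add, add_mul, mul_assoc]
    simp [ca', ca0, swa, swa0, swd, swd0, mul_add, add_mul, mul_sub, sub_mul]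
    all_goals abel
  have t13 : L 1 3 * (N 0 + N 1 + N 2 + N 3) = (N 0 + N 1 + N 2 + N 3) * L 1 3 := by
    simp only [hL, hN, mul_sub, sub_mul, mul_add, add_mul, mul_assoc]
    simp [ca', ca0, swa, swa0, swd, swd0, mul_add, add_mul, mul_sub, sub_mul]
    all_goals abel
  have t23 : L 2 3 * (N 0 + N 1 + N 2 + N 3) = (N 0 + N 1 + N 2 + N 3) * L 2 3 := by
    simp only [hL, hN, mul_sub, sub_mul, mul_add, add_mul, mul_assoc]
    simp [ca', ca0, swa, swa0, swd, swd0, mul_add, add_mul, mul_sub, sub_mul]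
    all_goals abel
  have f1 : L 0 1 * (N 0 + N 1 - N 2 - N 3) = (N 0 + N 1 - N 2 - N 3) * L 0 1 := by
    simp only [hL, hN, mul_sub, sub_mul, mul_add, add_mul, mul_assoc]
    simp [ca', ca0, swa, swa0, swd, swd0, mul_add, add_mul, mul_sub, sub_mul]
    all_goals abel
  have f2 : L 2 3 * (N 0 + N 1 - N 2 - N 3) = (N 0 + N 1 - N 2 - N 3) * L 2 3 := by
    simp only [hL, hN, mul_sub, sub_mul, mul_add, add_mul, mul_assoc]
    simp [ca', ca0, swa, swa0, swd, swd0, mul_add, add_mul, mul_sub, sub_mul]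
    all_goals abel
  -- so(4)-type commutators
  have c1 : L 0 1 * L 0 2 = L 0 2 * L 0 1 - L 1 2 := by
    simp only [hL, hN, mul_sub, sub_mul, mul_add, add_mul, mul_assoc]
    simp [ca', ca0, swa, swa0, swd, swd0, mul_add, add_mul, mul_sub, sub_mul]
    all_goals abel
  have c2 : L 0 1 * L 1 2 = L 1 2 * L 0 1 + L 0 2 := by
    simp only [hL, hN, mul_sub, sub_mul, mul_add, add_mul, mul_assoc]
    simp [ca', ca0, swa, swa0, swd, swd0, mul_add, add_mul, mul_sub, sub_mul]
    all_goals abel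
  have c3 : L 0 1 * L 0 3 = L 0 3 * L 0 1 - L 1 3 := by
    simp only [hL, hN, mul_sub, sub_mul, mul_add, add_mul, mul_assoc]
    simp [ca', ca0, swa, swa0, swd, swd0, mul_add, add_mul, mul_sub, sub_mul]
    all_goals abel
  have c4 : L 0 1 * L 1 3 = L 1 3 * L 0 1 + L 0 3 := by
    simp only [hL, hN, mul_sub, sub_mul, mul_add, add_mul, mul_assoc]
    simp [ca', ca0, swa, swa0, swd, swd0, mul_add, add_mul, mul_sub, sub_mul]
    all_goals abel
  have c5 : L 0 1 * L 2 3 = L 2 3 * L 0 1 := by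
    simp only [hL, hN, mul_sub, sub_mul, mul_add, add_mul, mul_assoc]
    simp [ca', ca0, swa, swa0, swd, swd0, mul_add, add_mul, mul_sub, sub_mul]
    all_goals abel
  have c6 : L 2 3 * L 0 2 = L 0 2 * L 2 3 - L 0 3 := by
    simp only [hL, hN, mul_sub, sub_mul, mul_add, add_mul, mul_assoc]
    simp [ca', ca0, swa, swa0, swd, swd0, mul_add, add_mul, mul_sub, sub_mul]
    all_goals abel
  have c7 : L 2 3 * L 0 3 = L 0 3 * L 2 3 + L 0 2 := by
    simp only [hL, hN, mul_sub, sub_mul, mul_add, add_mul, mul_assoc]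
    simp [ca', ca0, swa, swa0, swd, swd0, mul_add, add_mul, mul_sub, sub_mul]
    all_goals abel
  have c8 : L 2 3 * L 1 2 = L 1 2 * L 2 3 - L 1 3 := by
    simp only [hL, hN, mul_sub, sub_mul, mul_add, add_mul, mul_assoc]
    simp [ca', ca0, swa, swa0, swd, swd0, mul_add, add_mul, mul_sub, sub_mul]
    all_goals abel
  have c9 : L 2 3 * L 1 3 = L 1 3 * L 2 3 + L 1 2 := by
    simp only [hL, hN, mul_sub, sub_mul, mul_add, add_mul, mul_assoc]
    simp [ca', ca0, swa, swa0, swd, swd0, mul_add, add_mul, mul_sub, sub_mul]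
    all_goals abel
  -- primed versions
  have mkp : ∀ {x y z : R}, x * y = y * x - z → ∀ t, x * (y * t) = y * (x * t) - z * t := by
    intro x y z h t; rw [← mul_assoc, h, sub_mul, mul_assoc]
  have mkq : ∀ {x y z : R}, x * y = y * x + z → ∀ t, x * (y * t) = y * (x * t) + z * t := by
    intro x y z h t; rw [← mul_assoc, h, add_mul, mul_assoc]
  have mk0 : ∀ {x y : R}, x * y = y * x → ∀ t, x * (y * t) = y * (x * t) := by
    intro x y h t; rw [← mul_assoc, h, mul_assoc]
  -- L01 and L23 commute with the Casimir sum S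
  have hS01 : L 0 1 * (L 0 1 * L 0 1 + L 0 2 * L 0 2 + L 0 3 * L 0 3 + L 1 2 * L 1 2
        + L 1 3 * L 1 3 + L 2 3 * L 2 3)
      = (L 0 1 * L 0 1 + L 0 2 * L 0 2 + L 0 3 * L 0 3 + L 1 2 * L 1 2
        + L 1 3 * L 1 3 + L 2 3 * L 2 3) * L 0 1 := by
    simp only [mul_add, add_mul, mkp c1, mkq c2, mkp c3, mkq c4, mk0 c5, c1, c2, c3, c4, c5,
      sub_mul, add_mul, mul_sub, mul_add, mul_assoc]
    abel
  have hS23 : L 2 3 * (L 0 1 * L 0 1 + L 0 2 * L 0 2 + L 0 3 * L 0 3 + L 1 2 * L 1 2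
        + L 1 3 * L 1 3 + L 2 3 * L 2 3)
      = (L 0 1 * L 0 1 + L 0 2 * L 0 2 + L 0 3 * L 0 3 + L 1 2 * L 1 2
        + L 1 3 * L 1 3 + L 2 3 * L 2 3) * L 2 3 := by
    have c5r : L 2 3 * L 0 1 = L 0 1 * L 2 3 := c5.symm
    simp only [mul_add, add_mul, mkp c6, mkq c7, mkp c8, mkq c9, mk0 c5r, c6, c7, c8, c9, c5r,
      sub_mul, add_mul, mul_sub, mul_add, mul_assoc]
    abel
  -- evaluate the double sum
  have hSexp : (∑ i : Fin 4, ∑ j : Fin 4, if i < j then L i j ^ 2 else 0)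
      = L 0 1 * L 0 1 + L 0 2 * L 0 2 + L 0 3 * L 0 3 + L 1 2 * L 1 2
        + L 1 3 * L 1 3 + L 2 3 * L 2 3 := by
    simp only [Fin.sum_univ_four, Fin.isValue, pow_two,
      show ((0:Fin 4) < 1) = True by decide, show ((0:Fin 4) < 2) = True by decide,
      show ((0:Fin 4) < 3) = True by decide, show ((1:Fin 4) < 2) = True by decide,
      show ((1:Fin 4) < 3) = True by decide, show ((2:Fin 4) < 3) = True by decide,
      show ((0:Fin 4) < 0) = False by decide, show ((1:Fin 4) < 1) = False by decide,
      show ((2:Fin 4) < 2) = False by decide, show ((3:Fin 4) < 3) = False by decide,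
      show ((1:Fin 4) < 0) = False by decide, show ((2:Fin 4) < 0) = False by decide,
      show ((2:Fin 4) < 1) = False by decide, show ((3:Fin 4) < 0) = False by decide,
      show ((3:Fin 4) < 1) = False by decide, show ((3:Fin 4) < 2) = False by decide,
      if_true, if_false]
    abel
  -- commutation facts as `Commute`
  have comT1 : Commute M1 (N 0 + N 1 + N 2 + N 3) := by
    rw [hM1]; unfold Commute SemiconjBy
    rw [smul_mul_assoc, mul_smul_comm, g1]
  have comT2 : Commute M2 (N 0 + N 1 + N 2 + N 3) := by
    rw [hM2, hSexp]; unfold Commute SemiconjBy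
    have hTS : (L 0 1 * L 0 1 + L 0 2 * L 0 2 + L 0 3 * L 0 3 + L 1 2 * L 1 2
        + L 1 3 * L 1 3 + L 2 3 * L 2 3) * (N 0 + N 1 + N 2 + N 3)
        = (N 0 + N 1 + N 2 + N 3) * (L 0 1 * L 0 1 + L 0 2 * L 0 2 + L 0 3 * L 0 3
        + L 1 2 * L 1 2 + L 1 3 * L 1 3 + L 2 3 * L 2 3) := by
      have u : ∀ p q : Fin 4, L p q * (N 0 + N 1 + N 2 + N 3) = (N 0 + N 1 + N 2 + N 3) * L p q →
          (L p q * L p q) * (N 0 + N 1 + N 2 + N 3)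
            = (N 0 + N 1 + N 2 + N 3) * (L p q * L p q) := by
        intro p q h; rw [mul_assoc, h, ← mul_assoc, h, mul_assoc]
      rw [add_mul, add_mul, add_mul, add_mul, add_mul, u 0 1 t01, u 0 2 t02, u 0 3 t03,
        u 1 2 t12, u 1 3 t13, u 2 3 t23, mul_add, mul_add, mul_add, mul_add, mul_add]
    rw [neg_mul, mul_neg, smul_mul_assoc, mul_smul_comm, hTS]
  have sq1 : ∀ {x y : R}, x * y = y * x → x ^ 2 * y = y * x ^ 2 := by
    intro x y h; rw [pow_two, mul_assoc, h, ← mul_assoc, h, mul_assoc]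
  have comL1M1 : Commute M1 (L 0 1 ^ 2) := by
    rw [hM1]; unfold Commute SemiconjBy
    rw [smul_mul_assoc, mul_smul_comm, sq1 f1]
  have comL2M1 : Commute M1 (L 2 3 ^ 2) := by
    rw [hM1]; unfold Commute SemiconjBy
    rw [smul_mul_assoc, mul_smul_comm, sq1 f2]
  have comL1M2 : Commute M2 (L 0 1 ^ 2) := by
    rw [hM2, hSexp]; unfold Commute SemiconjBy
    rw [neg_mul, mul_neg, smul_mul_assoc, mul_smul_comm, sq1 hS01]
  have comL2M2 : Commute M2 (L 2 3 ^ 2) := by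
    rw [hM2, hSexp]; unfold Commute SemiconjBy
    rw [neg_mul, mul_neg, smul_mul_assoc, mul_smul_comm, sq1 hS23]
  have comd1M1 : Commute M1 d1 := by
    rw [hd1]
    exact (((comT1.add_right (Commute.ofNat_right M1 2)).mul_right
      (comL1M1.sub_right comL2M1)).smul_right _).neg_right
  have comd1M2 : Commute M2 d1 := by
    rw [hd1]
    exact (((comT2.add_right (Commute.ofNat_right M2 2)).mul_right
      (comL1M2.sub_right comL2M2)).smul_right _).neg_right
  have comd2M1 : Commute M1 d2 := by
    rw [hd2]
    exact (((comT1.add_right (Commute.ofNat_right M1 2)).pow_right 2).smul_right _).sub_right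
      ((comL1M1.add_right comL2M1).add_right (Commute.ofNat_right M1 2))
  have comd2M2 : Commute M2 d2 := by
    rw [hd2]
    exact (((comT2.add_right (Commute.ofNat_right M2 2)).pow_right 2).smul_right _).sub_right
      ((comL1M2.add_right comL2M2).add_right (Commute.ofNat_right M2 2))
  exact ⟨⟨comT1.symm.eq, comT2.symm.eq, comL1M1.symm.eq, comL1M2.symm.eq,
    comL2M1.symm.eq, comL2M2.symm.eq⟩,
    ⟨comd1M1.symm.eq, comd1M2.symm.eq, comd2M1.symm.eq, comd2M2.symm.eq⟩⟩
end

section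
/- In the q-oscillator algebra with generators A⁰, A⁺, A⁻ satisfying [A⁰, A^±] = ±A^±, [A⁻, A⁺] = q^{A⁰}, and A⁻A⁺ − qA⁺A⁻ = 1, the operators J_0 = (1/2)(A⁰ + 1/2), J_± = (1/[2]_{q^{1/2}})(A^±)² satisfy the U_q(su(1,1)) relations [J_0, J_±] = ±J_± and J_- J_+ − q² J_+ J_- = q^{2J_0} [2J_0]_q, where [x]_q = (q^x − q^{−x})/(q − q^{−1}). -/
set_option maxHeartbeats 1000000 in
/-- In the q-oscillator algebra with [A⁰,A^±] = ±A^±,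
[A⁻,A⁺] = q^{A⁰}, A⁻A⁺ − qA⁺A⁻ = 1 (here Q plays the role of q^{A⁰}, with
inverse Qinv and conjugation relations Q A^± = q^{±1} A^± Q), the operators
J₀ = (1/2)(A⁰ + 1/2), J± = (A^±)²/[2]_{q^{1/2}} satisfy the U_q(su(1,1))
relations [J₀,J±] = ±J± and J₋J₊ − q²J₊J₋ = q^{2J₀}[2J₀]_q, where
q^{2J₀}[2J₀]_q = (q − q⁻¹)⁻¹ (q·Q² − 1). -/
theorem stmt14 (q : ℝ) (hq : 0 < q) (hq1 : q ≠ 1)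
    (R : Type*) [Ring R] [Algebra ℝ R]
    (A0 Ap Am Q Qinv : R)
    (h0p : A0 * Ap - Ap * A0 = Ap)
    (h0m : A0 * Am - Am * A0 = -Am)
    (hQQ : Q * Qinv = 1) (hQQ' : Qinv * Q = 1)
    (hQ0 : Q * A0 = A0 * Q)
    (hQp : Q * Ap = q • (Ap * Q))
    (hQm : Q * Am = q⁻¹ • (Am * Q))
    (hcom : Am * Ap - Ap * Am = Q)
    (hqcom : Am * Ap - q • (Ap * Am) = 1)
    (J0 Jp Jm : R)
    (hJ0 : J0 = (1/2 : ℝ) • (A0 + (1/2 : ℝ) • (1 : R)))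
    (hJp : Jp = (Real.sqrt q + (Real.sqrt q)⁻¹)⁻¹ • (Ap * Ap))
    (hJm : Jm = (Real.sqrt q + (Real.sqrt q)⁻¹)⁻¹ • (Am * Am)) :
    J0 * Jp - Jp * J0 = Jp ∧
    J0 * Jm - Jm * J0 = -Jm ∧
    Jm * Jp - (q ^ 2) • (Jp * Jm) = (q - q⁻¹)⁻¹ • (q • (Q * Q) - 1) := by
  have hq0 : q ≠ 0 := ne_of_gt hq
  have hq1' : q - 1 ≠ 0 := sub_ne_zero.mpr hq1
  have hq1'' : q + 1 ≠ 0 := by positivity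
  set s : ℝ := Real.sqrt q with hs
  have hs0 : s ≠ 0 := by positivity
  have hs2 : s ^ 2 = q := Real.sq_sqrt hq.le
  set c : ℝ := (s + s⁻¹)⁻¹ with hc
  have hss : s + s⁻¹ ≠ 0 := by positivity
  set y : ℝ := (q - 1)⁻¹ with hy
  -- key conjugation facts
  have hAmQ : Am * Q = q • (Q * Am) := by
    rw [hQm, smul_smul, mul_inv_cancel₀ hq0, one_smul]
  have hApQ : Ap * Q = q⁻¹ • (Q * Ap) := by
    rw [hQp, smul_smul, inv_mul_cancel₀ hq0, one_smul]
  -- Ap*Am as a function of Q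
  have hPM : Ap * Am = y • (Q - 1) := by
    have h1 : (q - 1) • (Ap * Am) = Q - 1 := by
      calc (q - 1) • (Ap * Am)
          = (Am * Ap - Ap * Am) - (Am * Ap - q • (Ap * Am)) := by module
        _ = Q - 1 := by rw [hcom, hqcom]
    rw [hy, ← h1, smul_smul, inv_mul_cancel₀ hq1', one_smul]
  have hMP : Am * Ap = y • (Q - 1) + Q := by
    have : Am * Ap = Ap * Am + Q := by rw [← hcom]; noncomm_ring
    rw [this, hPM]
  -- first relation
  have k : A0 * Ap = Ap + Ap * A0 := sub_eq_iff_eq_add.mp h0p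
  have hp2 : A0 * (Ap * Ap) = (Ap * Ap) * A0 + (Ap * Ap) + (Ap * Ap) := by
    calc A0 * (Ap * Ap) = (A0 * Ap) * Ap := by noncomm_ring
      _ = (Ap + Ap * A0) * Ap := by rw [k]
      _ = Ap * Ap + Ap * (A0 * Ap) := by noncomm_ring
      _ = Ap * Ap + Ap * (Ap + Ap * A0) := by rw [k]
      _ = (Ap * Ap) * A0 + (Ap * Ap) + (Ap * Ap) := by noncomm_ring
  have km : A0 * Am = -Am + Am * A0 := sub_eq_iff_eq_add.mp h0m
  have hm2 : A0 * (Am * Am) = (Am * Am) * A0 - (Am * Am) - (Am * Am) := by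
    calc A0 * (Am * Am) = (A0 * Am) * Am := by noncomm_ring
      _ = (-Am + Am * A0) * Am := by rw [km]
      _ = -(Am * Am) + Am * (A0 * Am) := by noncomm_ring
      _ = -(Am * Am) + Am * (-Am + Am * A0) := by rw [km]
      _ = (Am * Am) * A0 - (Am * Am) - (Am * Am) := by noncomm_ring
  refine ⟨?_, ?_, ?_⟩
  · rw [hJ0, hJp]
    simp only [smul_mul_assoc, mul_smul_comm, add_mul, mul_add, smul_add, one_mul, mul_one,
      smul_smul]
    rw [hp2]
    module
  · rw [hJ0, hJm]
    simp only [smul_mul_assoc, mul_smul_comm, add_mul, mul_add, smul_add, one_mul, mul_one,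
      smul_smul]
    rw [hm2]
    module
  · -- conjugated products
    have hAmQAp : Am * Q * Ap = (q * y + q) • (Q * Q) - (q * y) • Q := by
      rw [hAmQ, smul_mul_assoc, mul_assoc, hMP]
      simp only [mul_add, mul_sub, mul_smul_comm, mul_one]
      module
    have hApQAm : Ap * Q * Am = (y * q⁻¹) • (Q * Q) - (y * q⁻¹) • Q := by
      rw [hApQ, smul_mul_assoc, mul_assoc, hPM]
      simp only [mul_add, mul_sub, mul_smul_comm, mul_one]
      module
    have t1 : Am * Am * (Ap * Ap) = (1 + y) • (Am * Q * Ap) - y • (Am * Ap) := by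
      have h : Am * Am * (Ap * Ap) = Am * (Am * Ap) * Ap := by noncomm_ring
      rw [h]; conv_lhs => rw [hMP]
      simp only [mul_add, add_mul, mul_sub, sub_mul, mul_smul_comm, smul_mul_assoc, mul_one,
        one_mul]
      module
    have t2 : Ap * Ap * (Am * Am) = y • (Ap * Q * Am) - y • (Ap * Am) := by
      have h : Ap * Ap * (Am * Am) = Ap * (Ap * Am) * Am := by noncomm_ring
      rw [h]; conv_lhs => rw [hPM]
      simp only [mul_add, add_mul, mul_sub, sub_mul, mul_smul_comm, smul_mul_assoc, mul_one,
        one_mul]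
      module
    have key3 : Am * Am * (Ap * Ap) - (q ^ 2) • (Ap * Ap * (Am * Am))
        = ((q + 1) * y) • (q • (Q * Q) - 1) := by
      rw [t1, t2, hAmQAp, hApQAm, hMP, hPM]
      have hne : (-1 : ℝ) + q ≠ 0 := by
        intro h; exact hq1 (by linarith)
      match_scalars <;> (try simp only [hy]) <;> field_simp [hne] <;> ring
    rw [hJp, hJm]
    simp only [smul_mul_assoc, mul_smul_comm, smul_smul]
    have lhs : (c * c) • (Am * Am * (Ap * Ap)) - (q ^ 2 * (c * c)) • (Ap * Ap * (Am * Am))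
        = (c * c) • (Am * Am * (Ap * Ap) - (q ^ 2) • (Ap * Ap * (Am * Am))) := by
      module
    rw [lhs, key3, smul_smul]
    congr 1
    rw [hc, hy]
    show (Real.sqrt q + (Real.sqrt q)⁻¹)⁻¹ * (Real.sqrt q + (Real.sqrt q)⁻¹)⁻¹ *
      ((q + 1) * (q - 1)⁻¹) = (q - q⁻¹)⁻¹
    have h1 : q - q⁻¹ ≠ 0 := by
      intro h
      apply hq1'
      have h2 : q⁻¹ = q := by linarith
      have h3 : q * q = 1 := by
        field_simp at h2
        nlinarith [h2]
      nlinarith [hq.le]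
    have h2 : Real.sqrt q ^ 2 = q := Real.sq_sqrt hq.le
    have h0 : Real.sqrt q ≠ 0 := by positivity
    have h3 : Real.sqrt q + (Real.sqrt q)⁻¹ ≠ 0 := by positivity
    clear_value s c y
    clear hs hc hy hss hs0 hs2 lhs key3 t1 t2 hAmQAp hApQAm hMP hPM
    obtain ⟨t, ht⟩ : ∃ t, Real.sqrt q = t := ⟨_, rfl⟩
    rw [ht] at h2 h0 h3 ⊢
    subst h2
    have hne1 : (t : ℝ) ^ 2 + 1 ≠ 0 := by positivity
    have hne2 : (t : ℝ) ^ 2 - 1 ≠ 0 := hq1'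
    have hne3 : (t : ℝ) ^ 4 - 1 ≠ 0 := by
      have e : (t : ℝ) ^ 4 - 1 = (t ^ 2 - 1) * (t ^ 2 + 1) := by ring
      rw [e]; exact mul_ne_zero hne2 hne1
    have e1 : t + t⁻¹ = (t ^ 2 + 1) / t := by field_simp
    have e2 : t ^ 2 - (t ^ 2)⁻¹ = (t ^ 4 - 1) / t ^ 2 := by field_simp
    rw [e1, e2, inv_div, inv_div]
    field_simp
    ring
end

section
/- In the algebra of two independent q-oscillators {A_i⁰, A_i^±} (i = 1,2), the element L_{12} = q^{−(A_1⁰ + 1/2)/2}(q^{1/4} A_1⁺ A_2⁻ − q^{−1/4} A_1⁻ A_2⁺) commutes with the coproduct-summed U_q(su(1,1)) generators J_0^{(2)} = (1/2)(A_1⁰ + 1/2) + (1/2)(A_2⁰ + 1/2) and J_±^{(2)} = (1/[2]_{q^{1/2}})((A_1^±)² q^{A_2⁰ + 1/2} + (A_2^±)²). -/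
private lemma mul_lift {R : Type*} [Semiring R] {u v w : R} (h : u * v = w) (x : R) :
    u * (v * x) = w * x := by rw [← mul_assoc, h]

set_option maxHeartbeats 3200000 in
/-- In the algebra of two independent q-oscillators (with Q i
playing the role of q^{A_i⁰} and T the role of q^{−A₁⁰/2}), the element
L₁₂ = q^{−(A₁⁰+1/2)/2}(q^{1/4}A₁⁺A₂⁻ − q^{−1/4}A₁⁻A₂⁺) commutes with the
coproduct-summed U_q(su(1,1)) generators
J₀^{(2)} = (1/2)(A₁⁰+1/2) + (1/2)(A₂⁰+1/2) and
J±^{(2)} = (1/[2]_{q^{1/2}})((A₁^±)² q^{A₂⁰+1/2} + (A₂^±)²). -/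
theorem stmt15 (q : ℝ) (hq : 0 < q) (hq1 : q ≠ 1)
    (R : Type*) [Ring R] [Algebra ℝ R]
    (A0 Ap Am Q Qinv : Fin 2 → R) (T : R)
    (h0p : ∀ i, A0 i * Ap i - Ap i * A0 i = Ap i)
    (h0m : ∀ i, A0 i * Am i - Am i * A0 i = -Am i)
    (hQQ : ∀ i, Q i * Qinv i = 1) (hQQ' : ∀ i, Qinv i * Q i = 1)
    (hQ0 : ∀ i, Q i * A0 i = A0 i * Q i)
    (hQp : ∀ i, Q i * Ap i = q • (Ap i * Q i))
    (hQm : ∀ i, Q i * Am i = q⁻¹ • (Am i * Q i))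
    (hcom : ∀ i, Am i * Ap i - Ap i * Am i = Q i)
    (hqcom : ∀ i, Am i * Ap i - q • (Ap i * Am i) = 1)
    -- generators of distinct oscillators commute
    (hdist : ∀ i j, i ≠ j → ∀ u ∈ ({A0 i, Ap i, Am i, Q i, Qinv i} : Set R),
      ∀ v ∈ ({A0 j, Ap j, Am j, Q j, Qinv j} : Set R), u * v = v * u)
    -- T = q^{−A₁⁰/2}: square is Qinv 0, conjugation relations, commutes with oscillator 2
    (hT2 : T * T = Qinv 0)
    (hT0 : T * A0 0 = A0 0 * T)
    (hTp : T * Ap 0 = (Real.sqrt q)⁻¹ • (Ap 0 * T))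
    (hTm : T * Am 0 = Real.sqrt q • (Am 0 * T))
    (hTdist : ∀ v ∈ ({A0 1, Ap 1, Am 1, Q 1, Qinv 1} : Set R), T * v = v * T)
    (L J0 Jp Jm : R)
    (hL : L = (Real.sqrt (Real.sqrt q))⁻¹ •
      (T * (Real.sqrt (Real.sqrt q) • (Ap 0 * Am 1)
            - (Real.sqrt (Real.sqrt q))⁻¹ • (Am 0 * Ap 1))))
    (hJ0 : J0 = (1/2 : ℝ) • (A0 0 + (1/2 : ℝ) • (1 : R))
              + (1/2 : ℝ) • (A0 1 + (1/2 : ℝ) • (1 : R)))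
    (hJp : Jp = (Real.sqrt q + (Real.sqrt q)⁻¹)⁻¹ •
      (Ap 0 * Ap 0 * (Real.sqrt q • Q 1) + Ap 1 * Ap 1))
    (hJm : Jm = (Real.sqrt q + (Real.sqrt q)⁻¹)⁻¹ •
      (Am 0 * Am 0 * (Real.sqrt q • Q 1) + Am 1 * Am 1)) :
    L * J0 = J0 * L ∧ L * Jp = Jp * L ∧ L * Jm = Jm * L := by
  subst hL hJ0 hJp hJm
  have h01 : (0 : Fin 2) ≠ 1 := by decide
  have hspos : (0:ℝ) < Real.sqrt q := Real.sqrt_pos.mpr hq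
  have hs0 : Real.sqrt q ≠ 0 := ne_of_gt hspos
  have hrpos : (0:ℝ) < Real.sqrt (Real.sqrt q) := Real.sqrt_pos.mpr hspos
  have hr0 : Real.sqrt (Real.sqrt q) ≠ 0 := ne_of_gt hrpos
  -- oscillator relations in rewriting form
  have hba : Am 0 * Ap 0 = 1 + q • (Ap 0 * Am 0) := sub_eq_iff_eq_add.mp (hqcom 0)
  have hdc : Am 1 * Ap 1 = 1 + q • (Ap 1 * Am 1) := sub_eq_iff_eq_add.mp (hqcom 1)
  have hK : Q 1 = 1 + (q - 1) • (Ap 1 * Am 1) := by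
    have h := hcom 1
    rw [hdc] at h
    rw [← h, sub_smul, one_smul]
    abel
  have haT : Ap 0 * T = Real.sqrt q • (T * Ap 0) := by
    rw [hTp, smul_smul, mul_inv_cancel₀ hs0, one_smul]
  have hbT : Am 0 * T = (Real.sqrt q)⁻¹ • (T * Am 0) := by
    rw [hTm, smul_smul, inv_mul_cancel₀ hs0, one_smul]
  have hcT : Ap 1 * T = T * Ap 1 := (hTdist (Ap 1) (by simp)).symm
  have hdT : Am 1 * T = T * Am 1 := (hTdist (Am 1) (by simp)).symm
  have heT : A0 0 * T = T * A0 0 := hT0.symm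
  have hfT : A0 1 * T = T * A0 1 := (hTdist (A0 1) (by simp)).symm
  have hca : Ap 1 * Ap 0 = Ap 0 * Ap 1 :=
    (hdist 0 1 h01 (Ap 0) (by simp) (Ap 1) (by simp)).symm
  have hcb : Ap 1 * Am 0 = Am 0 * Ap 1 :=
    (hdist 0 1 h01 (Am 0) (by simp) (Ap 1) (by simp)).symm
  have hda : Am 1 * Ap 0 = Ap 0 * Am 1 :=
    (hdist 0 1 h01 (Ap 0) (by simp) (Am 1) (by simp)).symm
  have hdb : Am 1 * Am 0 = Am 0 * Am 1 :=
    (hdist 0 1 h01 (Am 0) (by simp) (Am 1) (by simp)).symm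
  have hec : A0 0 * Ap 1 = Ap 1 * A0 0 :=
    hdist 0 1 h01 (A0 0) (by simp) (Ap 1) (by simp)
  have hed : A0 0 * Am 1 = Am 1 * A0 0 :=
    hdist 0 1 h01 (A0 0) (by simp) (Am 1) (by simp)
  have hfa : A0 1 * Ap 0 = Ap 0 * A0 1 :=
    (hdist 0 1 h01 (Ap 0) (by simp) (A0 1) (by simp)).symm
  have hfb : A0 1 * Am 0 = Am 0 * A0 1 :=
    (hdist 0 1 h01 (Am 0) (by simp) (A0 1) (by simp)).symm
  have hea : A0 0 * Ap 0 = Ap 0 + Ap 0 * A0 0 := sub_eq_iff_eq_add.mp (h0p 0)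
  have heb : A0 0 * Am 0 = -Am 0 + Am 0 * A0 0 := sub_eq_iff_eq_add.mp (h0m 0)
  have hfc : A0 1 * Ap 1 = Ap 1 + Ap 1 * A0 1 := sub_eq_iff_eq_add.mp (h0p 1)
  have hfd : A0 1 * Am 1 = -Am 1 + Am 1 * A0 1 := sub_eq_iff_eq_add.mp (h0m 1)
  -- abstract the square roots
  set s := Real.sqrt q with hsd
  set r := Real.sqrt s with hrd
  have hss : s * s = q := Real.mul_self_sqrt hq.le
  have hrr : r * r = s := Real.mul_self_sqrt hspos.le
  clear_value r
  clear_value s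
  clear hsd hrd hQp hQm hcom hqcom hdist hTdist hT2 hTp hTm hT0 hQQ hQQ' hQ0 h0p h0m
  have hq' : q = s * s := hss.symm
  subst hq'
  have hs' : s = r * r := hrr.symm
  subst hs'
  clear hss hrr hq hq1 hspos hs0
  refine ⟨?_, ?_, ?_⟩ <;>
  · simp only [hK, hba, mul_lift hba, hdc, mul_lift hdc, hca, mul_lift hca, hcb, mul_lift hcb,
      hda, mul_lift hda, hdb, mul_lift hdb, haT, mul_lift haT, hbT, mul_lift hbT,
      hcT, mul_lift hcT, hdT, mul_lift hdT, heT, mul_lift heT, hfT, mul_lift hfT,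
      hea, mul_lift hea, heb, mul_lift heb, hfc, mul_lift hfc, hfd, mul_lift hfd,
      hec, mul_lift hec, hed, mul_lift hed, hfa, mul_lift hfa, hfb, mul_lift hfb,
      smul_add, smul_sub, smul_smul, mul_add, add_mul, mul_sub, sub_mul,
      smul_mul_assoc, mul_smul_comm, mul_one, one_mul, mul_neg, neg_mul, mul_assoc]
    match_scalars <;> field_simp <;> ring
end
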